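/- Let A ∈ ℝ^{n×m} and let U = [U₁ U₂] be orthogonal with U₁ ∈ ℝ^{m×k}. Let J be an index set of ℓ ≥ k column indices such that U₁(J,:) (the rows of U₁ indexed by J) has full column rank. Then ‖A − A(:,J)A(:,J)†A‖ ≤ ‖U₁(J,:)†‖ · ‖A U₂ U₂(J,:)ᵀ‖ + ‖A U₂‖ in the spectral norm. -/

import Mathlib

open Matrix

noncomputable def specNorm {m n : Type*} [Fintype m] [Fintype n] [DecidableEq n]
    (A : Matrix m n ℝ) : ℝ :=
  ‖LinearMap.toContinuousLinearMap (Matrix.toEuclideanLin A)‖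

noncomputable def sMin {m n : Type*} [Fintype m] [Fintype n] [DecidableEq n]
    (A : Matrix m n ℝ) : ℝ :=
  Real.sqrt (⨅ i, (show (Aᵀ * A).IsHermitian by simpa using Matrix.isHermitian_conjTranspose_mul_self A).eigenvalues i)

noncomputable def singVals {m n : ℕ} (A : Matrix (Fin m) (Fin n) ℝ) : Fin n → ℝ :=
  fun i =>
    Real.sqrt ((show (Aᵀ * A).IsHermitian by simpa using Matrix.isHermitian_conjTranspose_mul_self A).eigenvalues
      (Tuple.sort (show (Aᵀ * A).IsHermitian by simpa using Matrix.isHermitian_conjTranspose_mul_self A).eigenvalues i.rev))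

noncomputable def pinv {m n : Type*} [Fintype m] [Fintype n] (A : Matrix m n ℝ) : Matrix n m ℝ :=
  open Classical in
  if h : ∃ B : Matrix n m ℝ,
      A * B * A = A ∧ B * A * B = B ∧ (A * B)ᵀ = A * B ∧ (B * A)ᵀ = B * A
  then h.choose else 0

/-! ### Auxiliary lemmas -/

lemma pinv_exists {m n : Type*} [Fintype m] [Fintype n] (A : Matrix m n ℝ) :
    ∃ B : Matrix n m ℝ,
      A * B * A = A ∧ B * A * B = B ∧ (A * B)ᵀ = A * B ∧ (B * A)ᵀ = B * A := by
  classical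
  set M : Matrix n n ℝ := Aᵀ * A with hMdef
  have hM : M.IsHermitian := by simpa using Matrix.isHermitian_conjTranspose_mul_self A
  set V : Matrix n n ℝ := (hM.eigenvectorUnitary : Matrix n n ℝ) with hV
  set μ : n → ℝ := hM.eigenvalues with hμ
  have hVV : V * Vᵀ = 1 := by
    have := (Matrix.mem_unitaryGroup_iff).mp hM.eigenvectorUnitary.2
    simpa [star_eq_conjTranspose] using this
  have hVV' : Vᵀ * V = 1 := by
    have := (Matrix.mem_unitaryGroup_iff').mp hM.eigenvectorUnitary.2
    simpa [star_eq_conjTranspose] using this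
  have hspec : M = V * Matrix.diagonal μ * Vᵀ := by
    have := hM.spectral_theorem
    simpa [star_eq_conjTranspose] using this
  set N : Matrix n n ℝ := V * Matrix.diagonal (fun i => (μ i)⁻¹) * Vᵀ with hN
  have key : ∀ a b : n → ℝ, (V * Matrix.diagonal a * Vᵀ) * (V * Matrix.diagonal b * Vᵀ)
      = V * Matrix.diagonal (fun i => a i * b i) * Vᵀ := by
    intro a b
    calc (V * Matrix.diagonal a * Vᵀ) * (V * Matrix.diagonal b * Vᵀ)
        = V * (Matrix.diagonal a * (Vᵀ * V) * Matrix.diagonal b) * Vᵀ := by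
          simp only [Matrix.mul_assoc]
      _ = V * Matrix.diagonal (fun i => a i * b i) * Vᵀ := by
          rw [hVV', Matrix.mul_one, Matrix.diagonal_mul_diagonal]
  have hsymm : ∀ a : n → ℝ, (V * Matrix.diagonal a * Vᵀ)ᵀ = V * Matrix.diagonal a * Vᵀ := by
    intro a
    simp [Matrix.transpose_mul, Matrix.diagonal_transpose, Matrix.mul_assoc]
  have hNM : N * M = V * Matrix.diagonal (fun i => (μ i)⁻¹ * μ i) * Vᵀ := by
    rw [hspec, hN, key]
  have hcomm : (fun i => μ i * (μ i)⁻¹) = fun i => (μ i)⁻¹ * μ i := by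
    funext i; ring
  have hMN : M * N = V * Matrix.diagonal (fun i => (μ i)⁻¹ * μ i) * Vᵀ := by
    rw [hspec, hN, key, hcomm]
  have hMNM : M * N * M = M := by
    rw [hMN, hspec, key]
    have : (fun i => (μ i)⁻¹ * μ i * μ i) = μ := by
      funext i; by_cases h : μ i = 0 <;> field_simp [h]
    rw [this]
  have hNMN : N * M * N = N := by
    rw [hNM, hN, key]
    have : (fun i => (μ i)⁻¹ * μ i * (μ i)⁻¹) = fun i => (μ i)⁻¹ := by
      funext i; by_cases h : μ i = 0 <;> field_simp [h]
    rw [this]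
  have hANM : A * (N * M) = A := by
    have hz : M * (N * M - 1) = 0 := by
      rw [Matrix.mul_sub, Matrix.mul_one, ← Matrix.mul_assoc, hMNM, sub_self]
    have : (A * (N * M - 1))ᵀ * (A * (N * M - 1)) = 0 := by
      have : (A * (N * M - 1))ᵀ * (A * (N * M - 1))
          = (N * M - 1)ᵀ * (M * (N * M - 1)) := by
        rw [Matrix.transpose_mul, hMdef]
        simp only [Matrix.mul_assoc]
      rw [this, hz, Matrix.mul_zero]
    have hconj : (A * (N * M - 1))ᴴ = (A * (N * M - 1))ᵀ := rfl
    have hz2 : A * (N * M - 1) = 0 := by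
      rw [← Matrix.conjTranspose_mul_self_eq_zero (A := A * (N * M - 1)), hconj]
      exact this
    rw [Matrix.mul_sub, Matrix.mul_one, sub_eq_zero] at hz2
    exact hz2
  refine ⟨N * Aᵀ, ?_, ?_, ?_, ?_⟩
  · calc A * (N * Aᵀ) * A = A * (N * M) := by rw [hMdef]; simp only [Matrix.mul_assoc]
      _ = A := hANM
  · calc N * Aᵀ * A * (N * Aᵀ) = (N * M * N) * Aᵀ := by rw [hMdef]; simp only [Matrix.mul_assoc]
      _ = N * Aᵀ := by rw [hNMN]
  · have : A * (N * Aᵀ) = A * N * Aᵀ := by simp only [Matrix.mul_assoc]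
    rw [this, Matrix.transpose_mul, Matrix.transpose_mul, Matrix.transpose_transpose]
    have hNs : Nᵀ = N := hsymm _
    rw [hNs]
    simp only [hN, Matrix.mul_assoc]
  · have h1 : N * Aᵀ * A = N * M := by rw [hMdef, Matrix.mul_assoc]
    rw [h1, hNM, hsymm]

lemma pinv_spec {m n : Type*} [Fintype m] [Fintype n] (A : Matrix m n ℝ) :
    A * pinv A * A = A ∧ pinv A * A * pinv A = pinv A ∧
      (A * pinv A)ᵀ = A * pinv A ∧ (pinv A * A)ᵀ = pinv A * A := by
  have hex := pinv_exists A
  rw [pinv, dif_pos hex]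
  exact hex.choose_spec

lemma pinv_left_inv {l k : ℕ} (A : Matrix (Fin l) (Fin k) ℝ) (h : A.rank = k) :
    pinv A * A = 1 := by
  obtain ⟨h1, -, -, -⟩ := pinv_spec A
  set C : Matrix (Fin k) (Fin k) ℝ := pinv A * A - 1 with hCdef
  have hAC : A * C = 0 := by
    rw [hCdef, Matrix.mul_sub, Matrix.mul_one, ← Matrix.mul_assoc, h1, sub_self]
  clear_value C
  have hker : LinearMap.ker A.mulVecLin = ⊥ := by
    have hrn := LinearMap.finrank_range_add_finrank_ker A.mulVecLin
    rw [Matrix.rank] at h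
    rw [h] at hrn
    have hd : Module.finrank ℝ (Fin k → ℝ) = k := by simp
    rw [hd] at hrn
    have : Module.finrank ℝ (LinearMap.ker A.mulVecLin) = 0 := by omega
    exact Submodule.finrank_eq_zero.mp this
  have hC : C = 0 := by
    ext x j
    have hcol : A.mulVecLin (fun y => C y j) = 0 := by
      funext i
      have := congrFun (congrFun hAC i) j
      simpa [Matrix.mulVecLin_apply, Matrix.mulVec, Matrix.mul_apply, dotProduct] using this
    have hm : (fun y => C y j) ∈ LinearMap.ker A.mulVecLin := hcol
    rw [hker, Submodule.mem_bot] at hm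
    simpa using congrFun hm x
  rw [hCdef] at hC
  rw [← sub_eq_zero]
  exact hC

open scoped Matrix.Norms.L2Operator

lemma specNorm_eq_l2 {m n : Type*} [Fintype m] [Fintype n] [DecidableEq n]
    (A : Matrix m n ℝ) : specNorm A = ‖A‖ := rfl

lemma l2_norm_one_le {n : Type*} [Fintype n] [DecidableEq n] :
    ‖(1 : Matrix n n ℝ)‖ ≤ 1 := by
  have h1 : Matrix.toEuclideanCLM (𝕜 := ℝ) (n := n) 1 = 1 := map_one _
  rw [Matrix.cstar_norm_def, h1]
  exact ContinuousLinearMap.norm_id_le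

lemma l2_norm_le_one_of_orthonormal {m k : Type*} [Fintype m] [Fintype k] [DecidableEq k]
    [DecidableEq m] (U : Matrix m k ℝ) (h : Uᵀ * U = 1) : ‖U‖ ≤ 1 := by
  have hs : ‖U‖ * ‖U‖ = ‖Uᵀ * U‖ := by
    rw [← Matrix.l2_opNorm_conjTranspose_mul_self U]; rfl
  rw [h] at hs
  have h1 : ‖(1 : Matrix k k ℝ)‖ ≤ 1 := l2_norm_one_le
  nlinarith [norm_nonneg U]

lemma l2_norm_proj_le_one {n : Type*} [Fintype n] [DecidableEq n]
    (Q : Matrix n n ℝ) (hs : Qᵀ = Q) (hi : Q * Q = Q) : ‖Q‖ ≤ 1 := by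
  have h2 : ‖Q‖ * ‖Q‖ = ‖Qᵀ * Q‖ := by
    rw [← Matrix.l2_opNorm_conjTranspose_mul_self Q]; rfl
  rw [hs, hi] at h2
  nlinarith [norm_nonneg Q]

lemma l2_norm_transpose {m n : Type*} [Fintype m] [Fintype n] [DecidableEq n] [DecidableEq m]
    (A : Matrix m n ℝ) : ‖Aᵀ‖ = ‖A‖ := by
  rw [← Matrix.l2_opNorm_conjTranspose A]; rfl

theorem chiu_column_projection_bound {n m k k2 l : ℕ} (A : Matrix (Fin n) (Fin m) ℝ)
    (U1 : Matrix (Fin m) (Fin k) ℝ) (U2 : Matrix (Fin m) (Fin k2) ℝ)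
    (horth1 : (Matrix.fromCols U1 U2)ᵀ * Matrix.fromCols U1 U2 = 1)
    (horth2 : Matrix.fromCols U1 U2 * (Matrix.fromCols U1 U2)ᵀ = 1)
    (J : Fin l ↪ Fin m) (hl : k ≤ l) (hJrank : (U1.submatrix J id).rank = k) :
    specNorm (A - A.submatrix id J * pinv (A.submatrix id J) * A) ≤
      specNorm (pinv (U1.submatrix J id)) * specNorm (A * U2 * (U2.submatrix J id)ᵀ) +
        specNorm (A * U2) := by
  classical
  -- selection matrix
  set E : Matrix (Fin m) (Fin l) ℝ := (1 : Matrix (Fin m) (Fin m) ℝ).submatrix id J with hE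
  have hAJ : A.submatrix id J = A * E := by
    ext i j
    simp [hE, Matrix.mul_apply, Matrix.submatrix_apply, Matrix.one_apply, mul_ite, mul_one,
      mul_zero, Finset.sum_ite_eq, Finset.sum_ite_eq']
  have hU1J : U1.submatrix J id = Eᵀ * U1 := by
    ext i j
    simp [hE, Matrix.mul_apply, Matrix.submatrix_apply, Matrix.one_apply, ite_mul, one_mul,
      zero_mul, Finset.sum_ite_eq, Finset.sum_ite_eq']
  have hU2J : U2.submatrix J id = Eᵀ * U2 := by
    ext i j
    simp [hE, Matrix.mul_apply, Matrix.submatrix_apply, Matrix.one_apply, ite_mul, one_mul,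
      zero_mul, Finset.sum_ite_eq, Finset.sum_ite_eq']
  -- orthogonality facts
  have hcols : U1 * U1ᵀ + U2 * U2ᵀ = 1 := by
    have h := horth2
    rw [Matrix.transpose_fromCols, Matrix.fromCols_mul_fromRows] at h
    exact h
  have hblocks := horth1
  rw [Matrix.transpose_fromCols, Matrix.fromRows_mul_fromCols] at hblocks
  rw [← Matrix.fromBlocks_one] at hblocks
  have hU1U1 : U1ᵀ * U1 = 1 := by
    have h := congrArg Matrix.toBlocks₁₁ hblocks
    simp only [Matrix.toBlocks_fromBlocks₁₁] at h
    exact h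
  have hU2U2 : U2ᵀ * U2 = 1 := by
    have h := congrArg Matrix.toBlocks₂₂ hblocks
    simp only [Matrix.toBlocks_fromBlocks₂₂] at h
    exact h
  -- projection
  obtain ⟨hP1, hP2, hP3, hP4⟩ := pinv_spec (A.submatrix id J)
  set P : Matrix (Fin n) (Fin n) ℝ := A.submatrix id J * pinv (A.submatrix id J) with hP
  set Q : Matrix (Fin n) (Fin n) ℝ := 1 - P with hQ
  have hPP : P * P = P := by
    rw [hP]
    calc A.submatrix id J * pinv (A.submatrix id J) * (A.submatrix id J * pinv (A.submatrix id J))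
        = (A.submatrix id J * pinv (A.submatrix id J) * A.submatrix id J)
            * pinv (A.submatrix id J) := by simp only [Matrix.mul_assoc]
      _ = A.submatrix id J * pinv (A.submatrix id J) := by rw [hP1]
  have hQs : Qᵀ = Q := by
    rw [hQ, Matrix.transpose_sub, Matrix.transpose_one, hP, hP3]
  have hQi' : (1 - P) * (1 - P) = 1 - P := by
    simp only [Matrix.sub_mul, Matrix.mul_sub, Matrix.one_mul, Matrix.mul_one, hPP]
    abel
  have hQi : Q * Q = Q := by rw [hQ]; exact hQi'
  have hQAJ : Q * A.submatrix id J = 0 := by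
    rw [hQ, Matrix.sub_mul, Matrix.one_mul, hP, Matrix.mul_assoc, ← Matrix.mul_assoc, hP1,
      sub_self]
  -- left inverse of U1J
  set B1 : Matrix (Fin k) (Fin l) ℝ := pinv (U1.submatrix J id) with hB1def
  have hB1 : B1 * U1.submatrix J id = 1 := pinv_left_inv _ hJrank
  have hB1t : (U1.submatrix J id)ᵀ * B1ᵀ = 1 := by
    rw [← Matrix.transpose_mul, hB1, Matrix.transpose_one]
  -- key decomposition of A * E
  have hU1E : U1ᵀ * E = (U1.submatrix J id)ᵀ := by
    rw [hU1J, Matrix.transpose_mul, Matrix.transpose_transpose]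
  have hU2E : U2ᵀ * E = (U2.submatrix J id)ᵀ := by
    rw [hU2J, Matrix.transpose_mul, Matrix.transpose_transpose]
  have hkey : A * E = A * U1 * (U1.submatrix J id)ᵀ + A * U2 * (U2.submatrix J id)ᵀ := by
    calc A * E = A * ((U1 * U1ᵀ + U2 * U2ᵀ) * E) := by rw [hcols, Matrix.one_mul]
      _ = A * U1 * (U1ᵀ * E) + A * U2 * (U2ᵀ * E) := by
          rw [Matrix.add_mul]
          simp only [Matrix.mul_add, Matrix.mul_assoc]
      _ = A * U1 * (U1.submatrix J id)ᵀ + A * U2 * (U2.submatrix J id)ᵀ := by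
          rw [hU1E, hU2E]
  have hAU1 : A * U1 = (A * E - A * U2 * (U2.submatrix J id)ᵀ) * B1ᵀ := by
    have h1 : A * U1 * (U1.submatrix J id)ᵀ = A * E - A * U2 * (U2.submatrix J id)ᵀ := by
      rw [hkey]; abel
    calc A * U1 = A * U1 * ((U1.submatrix J id)ᵀ * B1ᵀ) := by rw [hB1t, Matrix.mul_one]
      _ = (A * U1 * (U1.submatrix J id)ᵀ) * B1ᵀ := by simp only [Matrix.mul_assoc]
      _ = (A * E - A * U2 * (U2.submatrix J id)ᵀ) * B1ᵀ := by rw [h1]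
  -- main identity
  set X : Matrix (Fin n) (Fin l) ℝ := A * U2 * (U2.submatrix J id)ᵀ with hX
  have hQAE : Q * (A * E) = 0 := by rw [← hAJ, hQAJ]
  have hQA : A - A.submatrix id J * pinv (A.submatrix id J) * A = Q * A := by
    rw [hQ, Matrix.sub_mul, Matrix.one_mul, hP]
  clear_value X
  clear_value Q
  clear_value E
  clear_value B1
  have hmain : A - A.submatrix id J * pinv (A.submatrix id J) * A
      = -(Q * X * B1ᵀ * U1ᵀ) + Q * (A * U2) * U2ᵀ := by
    rw [hQA]
    calc Q * A = Q * A * (U1 * U1ᵀ + U2 * U2ᵀ) := by rw [hcols, Matrix.mul_one]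
      _ = Q * (A * U1) * U1ᵀ + Q * (A * U2) * U2ᵀ := by
          simp only [Matrix.mul_add, Matrix.mul_assoc]
      _ = Q * ((A * E - X) * B1ᵀ) * U1ᵀ + Q * (A * U2) * U2ᵀ := by rw [hAU1]
      _ = (Q * (A * E) * B1ᵀ - Q * X * B1ᵀ) * U1ᵀ + Q * (A * U2) * U2ᵀ := by
          rw [Matrix.sub_mul, Matrix.mul_sub]
          simp only [Matrix.mul_assoc]
      _ = -(Q * X * B1ᵀ * U1ᵀ) + Q * (A * U2) * U2ᵀ := by
          rw [hQAE, Matrix.zero_mul, zero_sub, Matrix.neg_mul]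
  -- now the norm estimates
  rw [hmain]
  simp only [specNorm_eq_l2]
  have hQn : ‖Q‖ ≤ 1 := l2_norm_proj_le_one Q hQs hQi
  have hU1n : ‖U1ᵀ‖ ≤ 1 := by
    rw [l2_norm_transpose]
    exact l2_norm_le_one_of_orthonormal U1 hU1U1
  have hU2n : ‖U2ᵀ‖ ≤ 1 := by
    rw [l2_norm_transpose]
    exact l2_norm_le_one_of_orthonormal U2 hU2U2
  have hB1tn : ‖B1ᵀ‖ = ‖B1‖ := l2_norm_transpose B1
  have hterm1 : ‖Q * X * B1ᵀ * U1ᵀ‖ ≤ ‖B1‖ * ‖X‖ := by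
    calc ‖Q * X * B1ᵀ * U1ᵀ‖ ≤ ‖Q * X * B1ᵀ‖ * ‖U1ᵀ‖ := Matrix.l2_opNorm_mul _ _
      _ ≤ ‖Q * X * B1ᵀ‖ * 1 :=
          mul_le_mul_of_nonneg_left hU1n (norm_nonneg _)
      _ = ‖Q * X * B1ᵀ‖ := mul_one _
      _ ≤ ‖Q * X‖ * ‖B1ᵀ‖ := Matrix.l2_opNorm_mul _ _
      _ ≤ (‖Q‖ * ‖X‖) * ‖B1‖ := by
          rw [hB1tn]
          exact mul_le_mul_of_nonneg_right (Matrix.l2_opNorm_mul _ _) (norm_nonneg _)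
      _ ≤ (1 * ‖X‖) * ‖B1‖ := by
          have := mul_le_mul_of_nonneg_right
            (mul_le_mul_of_nonneg_right hQn (norm_nonneg X)) (norm_nonneg B1)
          exact this
      _ = ‖B1‖ * ‖X‖ := by ring
  have hterm2 : ‖Q * (A * U2) * U2ᵀ‖ ≤ ‖A * U2‖ := by
    calc ‖Q * (A * U2) * U2ᵀ‖ ≤ ‖Q * (A * U2)‖ * ‖U2ᵀ‖ := Matrix.l2_opNorm_mul _ _
      _ ≤ ‖Q * (A * U2)‖ * 1 := mul_le_mul_of_nonneg_left hU2n (norm_nonneg _)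
      _ = ‖Q * (A * U2)‖ := mul_one _
      _ ≤ ‖Q‖ * ‖A * U2‖ := Matrix.l2_opNorm_mul _ _
      _ ≤ 1 * ‖A * U2‖ := mul_le_mul_of_nonneg_right hQn (norm_nonneg _)
      _ = ‖A * U2‖ := one_mul _
  calc ‖-(Q * X * B1ᵀ * U1ᵀ) + Q * (A * U2) * U2ᵀ‖
      ≤ ‖-(Q * X * B1ᵀ * U1ᵀ)‖ + ‖Q * (A * U2) * U2ᵀ‖ := norm_add_le _ _
    _ = ‖Q * X * B1ᵀ * U1ᵀ‖ + ‖Q * (A * U2) * U2ᵀ‖ := by rw [norm_neg]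
    _ ≤ ‖B1‖ * ‖X‖ + ‖A * U2‖ := add_le_add hterm1 hterm2
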